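/- Let G be a finite group with supercharacter theory S. Then G is a VZ(S)-group if and only if [G,S] ≤ V(S) ≤ Z(S). -/

import Mathlib

open scoped BigOperators Pointwise

/-- `f : G → ℂ` is an irreducible character of `G`. -/
def IsIrrChar (G : Type) [Group G] [Fintype G] (f : G → ℂ) : Prop :=
  ∃ V : FDRep ℂ G, CategoryTheory.Simple V ∧ V.character = f

/-- A supercharacter theory of a finite group `G` (Diaconis–Isaacs): a partition
`parts` of the set of irreducible characters of `G` together with a partition of `G`
into `S`-classes (`cls g` is the class of `g`), such that `{1}` is a class, the number
of parts equals the number of classes, and each supercharacter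
`σ_X = ∑ χ ∈ X, χ(1)·χ` is constant on every class. -/
structure SCT (G : Type) [Group G] [Fintype G] where
  parts : Finset (Finset (G → ℂ))
  cls : G → Set G
  parts_cover : ∀ f : G → ℂ, IsIrrChar G f ↔ ∃ X ∈ parts, f ∈ X
  parts_disj : ∀ X ∈ parts, ∀ Y ∈ parts, X ≠ Y → Disjoint X Y
  parts_nonempty : ∀ X ∈ parts, X.Nonempty
  mem_cls : ∀ g : G, g ∈ cls g
  cls_eq : ∀ g h : G, h ∈ cls g → cls h = cls g
  cls_one : cls (1 : G) = {1}
  card_eq : parts.card = Nat.card (Set.range cls)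
  const : ∀ X ∈ parts, ∀ g h : G, h ∈ cls g →
    (∑ χ ∈ X, χ 1 * χ h) = (∑ χ ∈ X, χ 1 * χ g)

variable {G : Type} [Group G] [Fintype G]

namespace SCT

/-- The supercharacter attached to a part `X`. -/
noncomputable def superchar (_S : SCT G) (X : Finset (G → ℂ)) : G → ℂ := fun g => ∑ χ ∈ X, χ 1 * χ g

/-- The set `Irr(S)` of `S`-characters. -/
def Irr (S : SCT G) : Set (G → ℂ) := {f | ∃ X ∈ S.parts, f = S.superchar X}

end SCT

/-- The kernel of a character-like function `f : G → ℂ`. -/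
def charKer (f : G → ℂ) : Subgroup G where
  carrier := {g | ∀ h, f (g * h) = f h}
  one_mem' := by intro h; simp
  mul_mem' := by intro a b ha hb h; rw [mul_assoc, ha, hb]
  inv_mem' := by
    intro a ha h
    have := ha (a⁻¹ * h)
    rw [mul_inv_cancel_left] at this
    exact this.symm

namespace SCT

/-- `[H,S]`, the subgroup generated by the `g⁻¹k` with `g ∈ H`, `k ∈ Cl_S(g)`. -/
def comm (S : SCT G) (H : Subgroup G) : Subgroup G :=
  Subgroup.closure {x | ∃ g ∈ H, ∃ k ∈ S.cls g, x = g⁻¹ * k}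

/-- `[G,S]`. -/
def derived (S : SCT G) : Subgroup G := S.comm ⊤

/-- `Irr(S | N)`: the `S`-characters whose kernel does not contain `N`. -/
def IrrRel (S : SCT G) (N : Subgroup G) : Set (G → ℂ) :=
  {f | f ∈ S.Irr ∧ ¬ N ≤ charKer f}

/-- `g` is an `S`-Camina element: all of `Irr(S | [G,S])` vanishes at `g`. -/
def IsCaminaElt (S : SCT G) (g : G) : Prop :=
  ∀ f ∈ S.IrrRel S.derived, f g = 0

/-- `N` is `S`-normal: a union of `S`-classes. -/
def IsNormal (S : SCT G) (N : Subgroup G) : Prop :=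
  ∀ g ∈ N, S.cls g ⊆ N

/-- `(G,N)` is a generalised `S`-Camina pair. -/
def IsGCP (S : SCT G) (N : Subgroup G) : Prop :=
  S.IsNormal N ∧ ∀ g : G, g ∉ N → S.IsCaminaElt g

/-- The set `Z(S)` of elements with singleton `S`-class. -/
def centerSet (S : SCT G) : Set G := {g | S.cls g = {g}}

/-- The vanishing-off subgroup `V(S | N)`. -/
def V (S : SCT G) (N : Subgroup G) : Subgroup G :=
  Subgroup.closure {g | ∃ f ∈ S.IrrRel N, f g ≠ 0}

/-- `V(S) = V(S | [G,S])`. -/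
def VS (S : SCT G) : Subgroup G := S.V S.derived

/-- `U(S | N)`: the product of all `S`-normal subgroups `H` with `V(S | H) ≤ N`. -/
def U (S : SCT G) (N : Subgroup G) : Subgroup G :=
  ⨆ (H : Subgroup G) (_ : S.IsNormal H ∧ S.V H ≤ N), H

/-- The upper `S`-central series: `ζ_0 = 1` and `ζ_{i+1}/ζ_i = Z(S^{G/ζ_i})`,
i.e. `ζ_{i+1}` consists of the `g` whose `S`-class maps onto the single coset `gζ_i`. -/
def zeta (S : SCT G) : ℕ → Subgroup G
  | 0 => ⊥
  | i + 1 => Subgroup.closure {g | ∀ k ∈ S.cls g, g⁻¹ * k ∈ S.zeta i}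

/-- The lower `S`-central series `γ_1 = G`, `γ_{i+1} = [γ_i, S]` (with `γ_0 := G`). -/
def gamma (S : SCT G) : ℕ → Subgroup G
  | 0 => ⊤
  | 1 => ⊤
  | n + 2 => S.comm (S.gamma (n + 1))

/-- The series `V_1(S) = V(S)`, `V_{i+1}(S) = [V_i(S), S]` (with `V_0 := V(S)`). -/
def Vseq (S : SCT G) : ℕ → Subgroup G
  | 0 => S.VS
  | 1 => S.VS
  | n + 2 => S.comm (S.Vseq (n + 1))

/-- `G` is a `VZ(S)`-group: every member of `Irr(S | [G,S])` vanishes off `Z(S)`. -/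
def IsVZ (S : SCT G) : Prop :=
  ∀ f ∈ S.IrrRel S.derived, ∀ g : G, g ∉ S.centerSet → f g = 0

end SCT


section Aux
open CategoryTheory


noncomputable def trivFDRep (G : Type) [Group G] : FDRep ℂ G :=
  FDRep.of (Representation.trivial ℂ (G := G) (V := ℂ))

theorem trivFDRep_char : (trivFDRep G).character = fun _ => 1 := by
  funext g
  unfold FDRep.character trivFDRep
  have h : (FDRep.of (Representation.trivial ℂ (G := G) (V := ℂ))).ρ g = LinearMap.id := rfl
  rw [h, LinearMap.trace_id]
  have h2 : Module.finrank ℂ ℂ = 1 :=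
    Module.finrank_self ℂ
  change ((Module.finrank ℂ ℂ : ℕ) : ℂ) = 1
  rw [h2]
  norm_num

omit [Fintype G] in
theorem inj_of_mono {V W : FDRep ℂ G} (f : V ⟶ W) [Mono f] :
    Function.Injective (f.hom.hom.hom : V →ₗ[ℂ] W) := by
  haveI : Mono ((Action.forget (FGModuleCat ℂ) G ⋙
      forget₂ (FGModuleCat ℂ) (ModuleCat ℂ)).map f) :=
    CategoryTheory.preserves_mono_of_preservesLimit _ f
  exact (ModuleCat.mono_iff_injective _).mp this

instance : Simple (trivFDRep G) := by
  constructor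
  intro Y f hm
  constructor
  · intro hiso hf0
    rcases hiso with ⟨g', hg1, hg2⟩
    rw [hf0, Limits.comp_zero] at hg2
    have := congrArg (fun (p : trivFDRep G ⟶ trivFDRep G) => p.hom.hom.hom (1:ℂ)) hg2.symm
    simp only [Action.id_hom, Action.zero_hom] at this
    change (1 : ℂ) = 0 at this
    exact one_ne_zero this
  · intro hf0
    let F : Y →ₗ[ℂ] ℂ := f.hom.hom.hom
    have hinj : Function.Injective F := inj_of_mono f
    have hne : F ≠ 0 := by
      intro h0
      apply hf0
      ext v
      exact congrFun (congrArg (fun (l : Y →ₗ[ℂ] ℂ) => (l : Y → ℂ)) h0) v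
    obtain ⟨y, hy⟩ : ∃ y, F y ≠ 0 := by
      by_contra hall
      push_neg at hall
      exact hne (LinearMap.ext fun v => hall v)
    have hsurj : Function.Surjective F := by
      intro c
      refine ⟨(c * (F y)⁻¹) • y, ?_⟩
      rw [map_smul, smul_eq_mul, mul_assoc, inv_mul_cancel₀ hy, mul_one]
    let e : Y ≃ₗ[ℂ] ℂ := LinearEquiv.ofBijective F ⟨hinj, hsurj⟩
    have hfix : ∀ (g : G) (w : Y), (Y.ρ g) w = w := by
      intro g w
      apply hinj
      have hc := congrArg (fun (l : _ ⟶ _) => (l : Y → ℂ) w) (f.comm g)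
      change F ((Y.ρ g) w) = ((trivFDRep G).ρ g) (F w) at hc
      rw [hc]
      rfl
    refine ⟨⟨⟨FGModuleCat.ofHom (e.symm : ℂ →ₗ[ℂ] Y), ?_⟩, ?_, ?_⟩⟩
    · intro g
      apply FGModuleCat.hom_ext; apply LinearMap.ext; intro c
      change (e.symm : ℂ →ₗ[ℂ] Y) (((trivFDRep G).ρ g) c) = (Y.ρ g) ((e.symm : ℂ →ₗ[ℂ] Y) c)
      rw [hfix]
      rfl
    · ext v
      change (e.symm : ℂ →ₗ[ℂ] Y) (F v) = v
      exact e.symm_apply_apply v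
    · apply Action.Hom.ext; apply FGModuleCat.hom_ext; apply LinearMap.ext; intro c
      change F ((e.symm : ℂ →ₗ[ℂ] Y) c) = c
      exact e.apply_symm_apply c

namespace SCTAux
open scoped Classical

noncomputable def pB (f f' : G → ℂ) : ℂ := (Fintype.card G : ℂ)⁻¹ * ∑ g : G, f g * f' g⁻¹

lemma cardC_ne : (Fintype.card G : ℂ) ≠ 0 := by exact_mod_cast Fintype.card_ne_zero

lemma pB_sum {ι : Type*} (s : Finset ι) (F : ι → G → ℂ) (f' : G → ℂ) :
    pB (fun g => ∑ i ∈ s, F i g) f' = ∑ i ∈ s, pB (F i) f' := by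
  unfold pB
  simp only [Finset.sum_mul]
  rw [Finset.sum_comm, Finset.mul_sum]

lemma pB_smul (c : ℂ) (f f' : G → ℂ) : pB (fun g => c * f g) f' = c * pB f f' := by
  unfold pB
  simp only [mul_assoc]
  rw [← Finset.mul_sum, ← mul_assoc, mul_comm _ c, mul_assoc]

omit [Fintype G] in
lemma nontrivial_of_simple (V : FDRep ℂ G) [Simple V] : Nontrivial V := by
  by_contra hn
  rw [not_nontrivial_iff_subsingleton] at hn
  apply CategoryTheory.id_nonzero V
  ext v
  exact @Subsingleton.elim _ hn _ _

lemma irr_one_nat {f : G → ℂ} (hf : IsIrrChar G f) : ∃ n : ℕ, 0 < n ∧ f 1 = n := by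
  obtain ⟨V, hV, rfl⟩ := hf
  haveI := hV
  refine ⟨Module.finrank ℂ V, ?_, by simp⟩
  haveI := nontrivial_of_simple V
  exact Module.finrank_pos

lemma irr_one_ne {f : G → ℂ} (hf : IsIrrChar G f) : f 1 ≠ 0 := by
  obtain ⟨n, hn, he⟩ := irr_one_nat hf
  rw [he]
  exact_mod_cast hn.ne'

lemma pB_irr {f f' : G → ℂ} (hf : IsIrrChar G f) (hf' : IsIrrChar G f') :
    pB f f' = if f = f' then 1 else 0 := by
  classical
  obtain ⟨V, hV, rfl⟩ := hf
  obtain ⟨W, hW, rfl⟩ := hf'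
  haveI := hV; haveI := hW
  have hcne : ((Nat.card G : ℂ)) ≠ 0 := by rw [Nat.card_eq_fintype_card]; exact cardC_ne
  letI : Invertible ((Nat.card G : ℂ)) := invertibleOfNonzero hcne
  have h := FDRep.char_orthonormal (k := ℂ) (G := G) V W
  rw [Nat.card_eq_fintype_card] at h
  by_cases hc : Nonempty (V ≅ W)
  · rw [if_pos hc] at h
    rw [if_pos (FDRep.char_iso hc.some)]
    exact h
  · rw [if_neg hc] at h
    have hne : V.character ≠ W.character := by
      intro he
      have h2 := FDRep.char_orthonormal (k := ℂ) (G := G) V V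
      rw [Nat.card_eq_fintype_card, if_pos ⟨Iso.refl V⟩] at h2
      rw [← he] at h
      rw [h] at h2
      exact one_ne_zero h2.symm
    rw [if_neg hne]
    exact h

variable (S : SCT G)

lemma irr_of_mem {X : Finset (G → ℂ)} (hX : X ∈ S.parts) {χ : G → ℂ} (hχ : χ ∈ X) :
    IsIrrChar G χ := (S.parts_cover χ).mpr ⟨X, hX, hχ⟩

lemma part_eq {X Y : Finset (G → ℂ)} (hX : X ∈ S.parts) (hY : Y ∈ S.parts) {χ : G → ℂ}
    (h1 : χ ∈ X) (h2 : χ ∈ Y) : X = Y := by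
  by_contra hne
  exact Finset.disjoint_left.mp (S.parts_disj X hX Y hY hne) h1 h2

/-- pairing of a supercharacter with an irreducible character -/
lemma pB_superchar_irr {X : Finset (G → ℂ)} (hX : X ∈ S.parts) {f' : G → ℂ}
    (hf' : IsIrrChar G f') : pB (S.superchar X) f' = if f' ∈ X then f' 1 else 0 := by
  classical
  unfold SCT.superchar
  rw [pB_sum]
  have : ∀ χ ∈ X, pB (fun g => χ 1 * χ g) f' = if χ = f' then χ 1 else 0 := by
    intro χ hχ
    rw [pB_smul, pB_irr (irr_of_mem S hX hχ) hf']
    by_cases h : χ = f' <;> simp [h]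
  rw [Finset.sum_congr rfl this, Finset.sum_ite_eq' X f' (fun χ => χ 1)]

/-- The submodule of `S`-class functions. -/
noncomputable def clsFun : Submodule ℂ (G → ℂ) where
  carrier := {f | ∀ g h : G, h ∈ S.cls g → f h = f g}
  add_mem' := by intro a b ha hb g h hh; simp [ha g h hh, hb g h hh]
  zero_mem' := by intro g h _; rfl
  smul_mem' := by intro c f hf g h hh; simp [hf g h hh]

lemma superchar_mem_clsFun {X : Finset (G → ℂ)} (hX : X ∈ S.parts) :
    S.superchar X ∈ clsFun S := fun g h hh => S.const X hX g h hh

/-- class functions are determined by values on classes -/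
noncomputable def clsFunEquiv : clsFun S ≃ₗ[ℂ] (↥(Set.range S.cls) → ℂ) where
  toFun f C := f.1 C.2.choose
  map_add' f g := rfl
  map_smul' c f := rfl
  invFun φ := ⟨fun g => φ ⟨S.cls g, ⟨g, rfl⟩⟩, by
    intro g h hh
    exact congrArg φ (Subtype.ext (S.cls_eq g h hh))⟩
  left_inv f := by
    ext g
    have h1 : S.cls ((⟨S.cls g, ⟨g, rfl⟩⟩ : ↥(Set.range S.cls)).2.choose) = S.cls g :=
      (⟨S.cls g, ⟨g, rfl⟩⟩ : ↥(Set.range S.cls)).2.choose_spec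
    have h2 := S.mem_cls ((⟨S.cls g, ⟨g, rfl⟩⟩ : ↥(Set.range S.cls)).2.choose)
    rw [h1] at h2
    exact f.2 g _ h2
  right_inv φ := by
    ext C
    exact congrArg φ (Subtype.ext C.2.choose_spec)

lemma finrank_clsFun : Module.finrank ℂ ↥(clsFun S) = S.parts.card := by
  classical
  haveI : Fintype ↥(Set.range S.cls) := (Set.finite_range S.cls).fintype
  rw [(clsFunEquiv S).finrank_eq, Module.finrank_pi ℂ, S.card_eq, Nat.card_eq_fintype_card]

/-- key computation: pairing a combination of supercharacters against a fixed irreducible -/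
lemma pB_comb {c : ↥S.parts → ℂ} {Y : ↥S.parts} {χ₀ : G → ℂ} (hχ₀ : χ₀ ∈ Y.1) :
    pB (fun g => ∑ X : ↥S.parts, c X * S.superchar X.1 g) χ₀ = c Y * χ₀ 1 := by
  classical
  rw [pB_sum]
  have hirr : IsIrrChar G χ₀ := irr_of_mem S Y.2 hχ₀
  have hterm : ∀ X : ↥S.parts, pB (fun g => c X * S.superchar X.1 g) χ₀
      = if X = Y then c Y * χ₀ 1 else 0 := by
    intro X
    rw [pB_smul, pB_superchar_irr S X.2 hirr]
    by_cases hXY : X = Y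
    · subst hXY
      rw [if_pos hχ₀, if_pos rfl]
    · have : χ₀ ∉ X.1 := by
        intro hmem
        exact hXY (Subtype.ext (part_eq S X.2 Y.2 hmem hχ₀))
      rw [if_neg this, if_neg hXY, mul_zero]
  rw [Finset.sum_congr rfl (fun X _ => hterm X), Finset.sum_ite_eq' Finset.univ Y _]
  simp

lemma linindep_superchar : LinearIndependent ℂ (fun X : ↥S.parts => S.superchar X.1) := by
  classical
  rw [Fintype.linearIndependent_iff]
  intro c hc Y
  obtain ⟨χ₀, hχ₀⟩ := S.parts_nonempty Y.1 Y.2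
  have h0 : pB (fun g => ∑ X : ↥S.parts, c X * S.superchar X.1 g) χ₀ = 0 := by
    have he : (fun g => ∑ X : ↥S.parts, c X * S.superchar X.1 g) = fun _ => (0:ℂ) := by
      funext g
      simpa using congrFun hc g
    rw [he]
    unfold pB
    simp
  rw [pB_comb S hχ₀] at h0
  exact (mul_eq_zero.mp h0).resolve_right (irr_one_ne (irr_of_mem S Y.2 hχ₀))

lemma span_superchar :
    Submodule.span ℂ (Set.range (fun X : ↥S.parts => S.superchar X.1)) = clsFun S := by
  classical
  have hle : Submodule.span ℂ (Set.range (fun X : ↥S.parts => S.superchar X.1)) ≤ clsFun S := by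
    rw [Submodule.span_le]
    rintro f ⟨X, rfl⟩
    exact superchar_mem_clsFun S X.2
  refine Submodule.eq_of_le_of_finrank_le hle ?_
  rw [finrank_clsFun S, finrank_span_eq_card (linindep_superchar S)]
  simp

lemma exists_coeffs {f : G → ℂ} (hf : f ∈ clsFun S) :
    ∃ c : ↥S.parts → ℂ, ∀ g, f g = ∑ X : ↥S.parts, c X * S.superchar X.1 g := by
  classical
  rw [← span_superchar S] at hf
  rw [Submodule.mem_span_range_iff_exists_fun] at hf
  obtain ⟨c, hc⟩ := hf
  refine ⟨c, fun g => ?_⟩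
  rw [← congrFun hc g]
  simp

/-- the indicator function of a class is a class function -/
lemma indicator_mem_clsFun (b : G) :
    (fun g => if g ∈ S.cls b then (1:ℂ) else 0) ∈ clsFun S := by
  classical
  intro g h hh
  have hcls : S.cls h = S.cls g := S.cls_eq g h hh
  by_cases hg : g ∈ S.cls b
  · have hb : S.cls g = S.cls b := S.cls_eq b g hg
    have : h ∈ S.cls b := by
      have := S.mem_cls h
      rw [hcls, hb] at this
      exact this
    simp only [if_pos hg, if_pos this]
  · have hh2 : h ∉ S.cls b := by
      intro hmem
      apply hg
      have h3 : S.cls h = S.cls b := S.cls_eq b h hmem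
      have := S.mem_cls g
      rw [← hcls, h3] at this
      exact this
    simp only [if_neg hg, if_neg hh2]

/-- expansion of the regular character: `∑_X σ_X(g) = |G| δ₁(g)` -/
lemma sum_superchar (g : G) :
    ∑ X : ↥S.parts, S.superchar X.1 g = if g = 1 then (Fintype.card G : ℂ) else 0 := by
  classical
  have hmem : (fun x => if x ∈ S.cls 1 then (1:ℂ) else 0) ∈ clsFun S := indicator_mem_clsFun S 1
  obtain ⟨c, hc⟩ := exists_coeffs S hmem
  -- coefficients are all card⁻¹
  have hcoeff : ∀ Y : ↥S.parts, c Y = (Fintype.card G : ℂ)⁻¹ := by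
    intro Y
    obtain ⟨χ₀, hχ₀⟩ := S.parts_nonempty Y.1 Y.2
    have h1 : pB (fun x => if x ∈ S.cls 1 then (1:ℂ) else 0) χ₀ = c Y * χ₀ 1 := by
      have := pB_comb S (c := c) hχ₀
      rw [← this]
      congr 1
      funext x
      exact hc x
    have h2 : pB (fun x => if x ∈ S.cls 1 then (1:ℂ) else 0) χ₀
        = (Fintype.card G : ℂ)⁻¹ * χ₀ 1 := by
      unfold pB
      congr 1
      rw [S.cls_one]
      have : ∀ x : G, (if x ∈ ({1} : Set G) then (1:ℂ) else 0) * χ₀ x⁻¹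
          = if x = 1 then χ₀ 1 else 0 := by
        intro x
        by_cases hx : x = 1 <;> simp [hx]
      rw [Finset.sum_eq_single (1:G)]
      · simp
      · intro b _ hb; simp [hb]
      · simp
    have := h1.symm.trans h2
    exact mul_right_cancel₀ (irr_one_ne (irr_of_mem S Y.2 hχ₀)) this
  have hg := hc g
  rw [S.cls_one] at hg
  have : ∑ X : ↥S.parts, c X * S.superchar X.1 g
      = (Fintype.card G : ℂ)⁻¹ * ∑ X : ↥S.parts, S.superchar X.1 g := by
    rw [Finset.mul_sum]
    exact Finset.sum_congr rfl fun X _ => by rw [hcoeff X]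
  rw [this] at hg
  have hgs : (if g ∈ ({1}:Set G) then (1:ℂ) else 0) = if g = 1 then 1 else 0 := by
    by_cases hx : g = 1 <;> simp [hx]
  simp only [Set.mem_singleton_iff] at hg
  have := congrArg (fun t => (Fintype.card G : ℂ) * t) hg
  rw [← mul_assoc, mul_inv_cancel₀ cardC_ne, one_mul] at this
  rw [← this]
  by_cases hx : g = 1 <;> simp [hx]

/-- separation: equal supercharacter values implies same class -/
lemma mem_cls_of_superchar_eq {a b : G} (h : ∀ X ∈ S.parts, S.superchar X a = S.superchar X b) :
    a ∈ S.cls b := by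
  classical
  obtain ⟨c, hc⟩ := exists_coeffs S (indicator_mem_clsFun S b)
  have ha := hc a
  have hb := hc b
  rw [if_pos (S.mem_cls b)] at hb
  have : ∑ X : ↥S.parts, c X * S.superchar X.1 a = ∑ X : ↥S.parts, c X * S.superchar X.1 b :=
    Finset.sum_congr rfl fun X _ => by rw [h X.1 X.2]
  rw [this, ← hb] at ha
  by_cases hmem : a ∈ S.cls b
  · exact hmem
  · rw [if_neg hmem] at ha
    exact absurd ha.symm one_ne_zero

lemma isIrrChar_one : IsIrrChar G (fun _ : G => (1:ℂ)) :=
  ⟨trivFDRep G, inferInstance, trivFDRep_char⟩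

/-- there is a part whose supercharacter is constantly 1 (the part of the trivial character) -/
lemma exists_const_part : ∃ X ∈ S.parts, ∀ g : G, S.superchar X g = 1 := by
  classical
  obtain ⟨X₀, hX₀, hmem₀⟩ := (S.parts_cover (fun _ : G => (1:ℂ))).mp isIrrChar_one
  have hone : (fun _ : G => (1:ℂ)) ∈ clsFun S := fun g h _ => rfl
  obtain ⟨c, hc⟩ := exists_coeffs S hone
  have hcoeff : ∀ (Y : ↥S.parts) (χ₀ : G → ℂ), χ₀ ∈ Y.1 →
      c Y * χ₀ 1 = if (fun _ : G => (1:ℂ)) = χ₀ then 1 else 0 := by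
    intro Y χ₀ hχ₀
    rw [← pB_irr isIrrChar_one (irr_of_mem S Y.2 hχ₀), ← pB_comb S (c := c) hχ₀]
    congr 1
    funext x
    exact (hc x).symm
  have hc₀ : c ⟨X₀, hX₀⟩ = 1 := by
    have := hcoeff ⟨X₀, hX₀⟩ (fun _ : G => (1:ℂ)) hmem₀
    rw [if_pos rfl] at this
    simpa using this
  have hcz : ∀ Y : ↥S.parts, Y ≠ ⟨X₀, hX₀⟩ → c Y = 0 := by
    intro Y hY
    obtain ⟨χ₀, hχ₀⟩ := S.parts_nonempty Y.1 Y.2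
    have hne : (fun _ : G => (1:ℂ)) ≠ χ₀ := by
      intro he
      exact hY (Subtype.ext (part_eq S Y.2 hX₀ (he ▸ hχ₀) hmem₀))
    have := hcoeff Y χ₀ hχ₀
    rw [if_neg hne] at this
    exact (mul_eq_zero.mp this).resolve_right (irr_one_ne (irr_of_mem S Y.2 hχ₀))
  refine ⟨X₀, hX₀, fun g => ?_⟩
  have h1 := hc g
  rw [Finset.sum_eq_single (⟨X₀, hX₀⟩ : ↥S.parts)] at h1
  · rw [hc₀, one_mul] at h1
    exact h1.symm
  · intro Y _ hY
    rw [hcz Y hY, zero_mul]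
  · intro h
    exact absurd (Finset.mem_univ _) h

lemma superchar_one_re_pos {X : Finset (G → ℂ)} (hX : X ∈ S.parts) :
    0 < (S.superchar X 1).re := by
  classical
  have : S.superchar X 1 = ∑ χ ∈ X, χ 1 * χ 1 := rfl
  rw [this, Complex.re_sum]
  refine Finset.sum_pos ?_ (S.parts_nonempty X hX)
  intro χ hχ
  obtain ⟨n, hn, he⟩ := irr_one_nat (irr_of_mem S hX hχ)
  rw [he]
  have : ((n:ℂ) * (n:ℂ)).re = (n:ℝ) * (n:ℝ) := by
    norm_cast
  rw [this]
  positivity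

/-- `[G,S] ≤ V(S)` -/
lemma derived_le_VS : S.derived ≤ S.VS := by
  classical
  rw [SCT.derived, SCT.comm]
  rw [Subgroup.closure_le]
  rintro x ⟨g, -, k, hk, rfl⟩
  by_cases hx1 : g⁻¹ * k = 1
  · rw [hx1]
    exact Subgroup.one_mem _
  have hxd : g⁻¹ * k ∈ S.derived :=
    Subgroup.subset_closure ⟨g, trivial, k, hk, rfl⟩
  by_contra hcon
  have hall : ∀ f ∈ S.IrrRel S.derived, f (g⁻¹ * k) = 0 := by
    intro f hf
    by_contra hf0
    exact hcon (Subgroup.subset_closure ⟨f, hf, hf0⟩)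
  have hsum := sum_superchar S (g⁻¹ * k)
  rw [if_neg hx1] at hsum
  have hterm : ∀ X : ↥S.parts, S.superchar X.1 (g⁻¹ * k)
      = if S.derived ≤ charKer (S.superchar X.1) then S.superchar X.1 1 else 0 := by
    intro X
    by_cases hker : S.derived ≤ charKer (S.superchar X.1)
    · rw [if_pos hker]
      have := hker hxd 1
      rwa [mul_one] at this
    · rw [if_neg hker]
      exact hall _ ⟨⟨X.1, X.2, rfl⟩, hker⟩
  rw [Finset.sum_congr rfl (fun X _ => hterm X)] at hsum
  rw [← Finset.sum_filter] at hsum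
  have hre := congrArg Complex.re hsum
  rw [Complex.re_sum] at hre
  obtain ⟨X₀, hX₀, hX₀c⟩ := exists_const_part S
  have hX₀ker : S.derived ≤ charKer (S.superchar X₀) := by
    intro n _
    intro h
    rw [hX₀c, hX₀c]
  have hpos : 0 < ∑ X ∈ Finset.univ.filter
      (fun X : ↥S.parts => S.derived ≤ charKer (S.superchar X.1)), (S.superchar X.1 1).re := by
    refine Finset.sum_pos ?_ ⟨⟨X₀, hX₀⟩, Finset.mem_filter.mpr ⟨Finset.mem_univ _, hX₀ker⟩⟩
    intro X _
    exact superchar_one_re_pos S X.2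
  rw [hre, Complex.zero_re] at hpos
  exact lt_irrefl 0 hpos

lemma irr_conj {f : G → ℂ} (hf : IsIrrChar G f) (g h : G) : f (h * g * h⁻¹) = f g := by
  obtain ⟨V, hV, rfl⟩ := hf
  exact FDRep.char_conj V g h

/-- elements with singleton class are central in `G` -/
lemma center_comm {z : G} (hz : z ∈ S.centerSet) : ∀ h : G, z * h = h * z := by
  intro h
  have hcls : S.cls z = {z} := hz
  have hsep : ∀ X ∈ S.parts, S.superchar X (h * z * h⁻¹) = S.superchar X z := by
    intro X hX
    unfold SCT.superchar
    exact Finset.sum_congr rfl fun χ hχ => by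
      rw [irr_conj (irr_of_mem S hX hχ) z h]
  have hmem := mem_cls_of_superchar_eq S hsep
  rw [hcls] at hmem
  have : h * z * h⁻¹ = z := hmem
  rw [mul_inv_eq_iff_eq_mul] at this
  exact this.symm

/-- Schur: a central element acts on each irreducible character by a nonzero scalar -/
lemma irr_scalar {z : G} (hcomm : ∀ h : G, z * h = h * z) {f : G → ℂ} (hf : IsIrrChar G f) :
    f z * (f 1)⁻¹ ≠ 0 ∧ (∀ g, f (z * g) = (f z * (f 1)⁻¹) * f g) ∧
      (∀ g, f (z⁻¹ * g) = (f z * (f 1)⁻¹)⁻¹ * f g) := by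
  have hone : f 1 ≠ 0 := irr_one_ne hf
  obtain ⟨V, hV, rfl⟩ := hf
  haveI := hV
  -- the morphism given by the action of z
  let φ : V ⟶ V := ⟨FGModuleCat.ofHom (V.ρ z : V →ₗ[ℂ] V), by
    intro g
    ext v
    change (V.ρ z) ((V.ρ g) v) = (V.ρ g) ((V.ρ z) v)
    rw [← Module.End.mul_apply, ← Module.End.mul_apply, ← map_mul, ← map_mul, hcomm]⟩
  obtain ⟨c, hc⟩ : ∃ c : ℂ, c • 𝟙 V = φ := by
    have h1 : Module.finrank ℂ (V ⟶ V) = 1 := by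
      rw [FDRep.finrank_hom_simple_simple]
      simp [Nonempty.intro (Iso.refl V)]
    exact (finrank_eq_one_iff_of_nonzero' (𝟙 V) (CategoryTheory.id_nonzero V)).mp h1 φ
  have hρ : (V.ρ z : V →ₗ[ℂ] V) = c • LinearMap.id := by
    have h2 : (φ.hom.hom.hom : V →ₗ[ℂ] V) = c • LinearMap.id := by
      rw [← hc]
      rfl
    exact h2
  have hchar : ∀ g, V.character (z * g) = c * V.character g := by
    intro g
    unfold FDRep.character
    rw [map_mul]
    change LinearMap.trace ℂ V ((V.ρ z) ∘ₗ (V.ρ g)) = _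
    rw [hρ, LinearMap.smul_comp, LinearMap.id_comp, map_smul, smul_eq_mul]
  have hc1 : V.character z = c * V.character 1 := by
    have := hchar 1
    rwa [mul_one] at this
  have hcval : V.character z * (V.character 1)⁻¹ = c := by
    rw [hc1, mul_assoc, mul_inv_cancel₀ hone, mul_one]
  have hcne : c ≠ 0 := by
    intro hc0
    rw [hc0, zero_smul] at hρ
    haveI := nontrivial_of_simple V
    obtain ⟨v, hv⟩ := exists_ne (0 : V)
    apply hv
    have hid : (V.ρ z⁻¹) ((V.ρ z) v) = v := by
      rw [← Module.End.mul_apply, ← map_mul, inv_mul_cancel, map_one, Module.End.one_apply]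
    rw [hρ] at hid
    simpa using hid.symm
  have hfor : ∀ g, V.character (z * g) = (V.character z * (V.character 1)⁻¹) * V.character g := by
    intro g
    rw [hcval]
    exact hchar g
  refine ⟨by rw [hcval]; exact hcne, hfor, fun g => ?_⟩
  have h2 := hfor (z⁻¹ * g)
  rw [mul_inv_cancel_left] at h2
  rw [h2, ← mul_assoc, inv_mul_cancel₀ (by rw [hcval]; exact hcne), one_mul]

/-- the scalar is constant on parts: supercharacters of central singleton-class elements -/
lemma part_scalar {z : G} (hz : z ∈ S.centerSet) {X : Finset (G → ℂ)} (hX : X ∈ S.parts) :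
    ∃ ε : ℂ, ε ≠ 0 ∧ (∀ g, S.superchar X (z * g) = ε * S.superchar X g) ∧
      (∀ g, S.superchar X (z⁻¹ * g) = ε⁻¹ * S.superchar X g) := by
  classical
  have hcomm := center_comm S hz
  have hcls : S.cls z = {z} := hz
  -- the coefficient extraction
  obtain ⟨c, hc⟩ := exists_coeffs S (indicator_mem_clsFun S z)
  have hkey : ∀ (Y : ↥S.parts) (χ₀ : G → ℂ), χ₀ ∈ Y.1 →
      (χ₀ z * (χ₀ 1)⁻¹)⁻¹ = (Fintype.card G : ℂ) * c Y := by
    intro Y χ₀ hχ₀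
    have hχ₀irr := irr_of_mem S Y.2 hχ₀
    have hfun : (fun g => ∑ X : ↥S.parts, S.superchar X.1 (z⁻¹ * g))
        = (fun g => (Fintype.card G : ℂ) * ∑ X : ↥S.parts, c X * S.superchar X.1 g) := by
      funext g
      rw [sum_superchar S (z⁻¹ * g), ← hc g]
      have hiff : z⁻¹ * g = 1 ↔ g ∈ S.cls z := by
        rw [hcls, inv_mul_eq_one]
        simp [eq_comm]
      by_cases hgz : z⁻¹ * g = 1
      · rw [if_pos hgz, if_pos (hiff.mp hgz), mul_one]
      · rw [if_neg hgz, if_neg (fun hm => hgz (hiff.mpr hm)), mul_zero]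
    have hL := congrArg (fun f => pB f χ₀) hfun
    -- compute LHS
    have hLval : pB (fun g => ∑ X : ↥S.parts, S.superchar X.1 (z⁻¹ * g)) χ₀
        = χ₀ 1 * (χ₀ z * (χ₀ 1)⁻¹)⁻¹ := by
      rw [pB_sum]
      have hX2 : ∀ X : ↥S.parts, pB (fun g => S.superchar X.1 (z⁻¹ * g)) χ₀
          = if X = Y then χ₀ 1 * (χ₀ z * (χ₀ 1)⁻¹)⁻¹ else 0 := by
        intro X
        have hXfun : (fun g => S.superchar X.1 (z⁻¹ * g))
            = fun g => ∑ χ ∈ X.1, (χ 1 * (χ z * (χ 1)⁻¹)⁻¹) * χ g := by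
          funext g
          unfold SCT.superchar
          refine Finset.sum_congr rfl fun χ hχ => ?_
          rw [(irr_scalar hcomm (irr_of_mem S X.2 hχ)).2.2 g, mul_assoc]
        rw [hXfun, pB_sum]
        have hterm : ∀ χ ∈ X.1, pB (fun g => (χ 1 * (χ z * (χ 1)⁻¹)⁻¹) * χ g) χ₀
            = if χ = χ₀ then χ 1 * (χ z * (χ 1)⁻¹)⁻¹ else 0 := by
          intro χ hχ
          rw [pB_smul, pB_irr (irr_of_mem S X.2 hχ) hχ₀irr]
          by_cases h : χ = χ₀ <;> simp [h]
        rw [Finset.sum_congr rfl hterm, Finset.sum_ite_eq' X.1 χ₀ (fun χ => χ 1 * (χ z * (χ 1)⁻¹)⁻¹)]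
        by_cases hXY : X = Y
        · subst hXY
          rw [if_pos hχ₀, if_pos rfl]
        · have : χ₀ ∉ X.1 := fun hm => hXY (Subtype.ext (part_eq S X.2 Y.2 hm hχ₀))
          rw [if_neg this, if_neg hXY]
      rw [Finset.sum_congr rfl (fun X _ => hX2 X), Finset.sum_ite_eq' Finset.univ Y _]
      simp
    -- compute RHS
    have hRval : pB (fun g => (Fintype.card G : ℂ) * ∑ X : ↥S.parts, c X * S.superchar X.1 g) χ₀
        = (Fintype.card G : ℂ) * (c Y * χ₀ 1) := by
      rw [pB_smul, pB_comb S (c := c) hχ₀]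
    rw [hLval, hRval] at hL
    have hone := irr_one_ne hχ₀irr
    refine mul_left_cancel₀ hone ?_
    rw [hL]
    ring
  obtain ⟨χ₁, hχ₁⟩ := S.parts_nonempty X hX
  have hε := (irr_scalar hcomm (irr_of_mem S hX hχ₁)).1
  refine ⟨χ₁ z * (χ₁ 1)⁻¹, hε, ?_, ?_⟩
  · intro g
    have hval : ∀ χ ∈ X, χ z * (χ 1)⁻¹ = χ₁ z * (χ₁ 1)⁻¹ := by
      intro χ hχ
      have h1 := hkey ⟨X, hX⟩ χ hχ
      have h2 := hkey ⟨X, hX⟩ χ₁ hχ₁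
      rw [← h2] at h1
      exact inv_injective h1
    unfold SCT.superchar
    rw [Finset.mul_sum]
    refine Finset.sum_congr rfl fun χ hχ => ?_
    rw [(irr_scalar hcomm (irr_of_mem S hX hχ)).2.1 g, hval χ hχ]
    ring
  · intro g
    have hval : ∀ χ ∈ X, χ z * (χ 1)⁻¹ = χ₁ z * (χ₁ 1)⁻¹ := by
      intro χ hχ
      have h1 := hkey ⟨X, hX⟩ χ hχ
      have h2 := hkey ⟨X, hX⟩ χ₁ hχ₁
      rw [← h2] at h1
      exact inv_injective h1
    unfold SCT.superchar
    rw [Finset.mul_sum]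
    refine Finset.sum_congr rfl fun χ hχ => ?_
    rw [(irr_scalar hcomm (irr_of_mem S hX hχ)).2.2 g, hval χ hχ]
    ring

/-- `Z(S)` is a subgroup -/
noncomputable def centerSubgroup : Subgroup G where
  carrier := S.centerSet
  one_mem' := S.cls_one
  mul_mem' := by
    intro z w hz hw
    show S.cls (z * w) = {z * w}
    refine Set.eq_singleton_iff_unique_mem.mpr ⟨S.mem_cls _, fun k hk => ?_⟩
    have hsep : ∀ X ∈ S.parts, S.superchar X (w⁻¹ * (z⁻¹ * k)) = S.superchar X 1 := by
      intro X hX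
      obtain ⟨εz, hεz, hz1, hz2⟩ := part_scalar S hz hX
      obtain ⟨εw, hεw, hw1, hw2⟩ := part_scalar S hw hX
      have hkval : S.superchar X k = S.superchar X (z * w) := S.const X hX (z * w) k hk
      have hzw : S.superchar X (z * w) = εz * (εw * S.superchar X 1) := by
        have h1 : z * w = z * (w * 1) := by rw [mul_one]
        rw [h1, hz1 (w * 1), hw1 1]
      rw [hw2, hz2, hkval, hzw]
      field_simp
    have hm := mem_cls_of_superchar_eq S (a := w⁻¹ * (z⁻¹ * k)) (b := 1) hsep
    rw [S.cls_one] at hm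
    have h1 : w⁻¹ * (z⁻¹ * k) = 1 := hm
    have h2 : w = z⁻¹ * k := by
      have := congrArg (fun t => w * t) h1
      simpa [← mul_assoc] using this.symm
    have h3 := congrArg (fun t => z * t) h2
    simpa [← mul_assoc] using h3.symm
  inv_mem' := by
    intro z hz
    show S.cls z⁻¹ = {z⁻¹}
    refine Set.eq_singleton_iff_unique_mem.mpr ⟨S.mem_cls _, fun k hk => ?_⟩
    have hsep : ∀ X ∈ S.parts, S.superchar X (z * k) = S.superchar X 1 := by
      intro X hX
      obtain ⟨εz, hεz, hz1, hz2⟩ := part_scalar S hz hX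
      have hkval : S.superchar X k = S.superchar X z⁻¹ := S.const X hX z⁻¹ k hk
      have hzi : S.superchar X z⁻¹ = εz⁻¹ * S.superchar X 1 := by
        have h1 : (z : G)⁻¹ = z⁻¹ * 1 := by rw [mul_one]
        rw [h1, hz2 1]
      rw [hz1, hkval, hzi]
      field_simp
    have hm := mem_cls_of_superchar_eq S (a := z * k) (b := 1) hsep
    rw [S.cls_one] at hm
    have h1 : z * k = 1 := hm
    have := congrArg (fun t => z⁻¹ * t) h1
    simpa [← mul_assoc] using this

end SCTAux

end Aux


/-- `G` is a `VZ(S)`-group iff `[G,S] ≤ V(S) ≤ Z(S)`. -/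
theorem isVZ_iff_derived_le_VS_le_center (S : SCT G) :
    S.IsVZ ↔ (S.derived ≤ S.VS ∧ (S.VS : Set G) ⊆ S.centerSet) := by
  constructor
  · intro hVZ
    refine ⟨SCTAux.derived_le_VS S, ?_⟩
    have hle : S.VS ≤ SCTAux.centerSubgroup S := by
      rw [SCT.VS, SCT.V, Subgroup.closure_le]
      rintro g ⟨f, hf, hfg⟩
      by_contra hg
      exact hfg (hVZ f hf g hg)
    exact fun g hg => hle hg
  · rintro ⟨-, h2⟩ f hf g hg
    by_contra hf0
    exact hg (h2 (Subgroup.subset_closure ⟨f, hf, hf0⟩))
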